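/- Let X be a compact abelian topological group with Haar probability measure ℙ, and let g : X → 𝕋 be a continuous character of infinite order. Then the pushforward of ℙ under g is the normalized Haar (uniform) measure on the circle 𝕋. -/

import Mathlib

open MeasureTheory

noncomputable instance : MeasurableSpace Circle := borel Circle
instance : BorelSpace Circle := ⟨rfl⟩

private lemma Circle.coe_pow' (z : Circle) (k : ℕ) : ((z ^ k : Circle) : ℂ) = (z : ℂ) ^ k :=
  map_pow Circle.coeHom z k

private lemma Circle.coe_zpow' (z : Circle) (n : ℤ) : ((z ^ n : Circle) : ℂ) = (z : ℂ) ^ n := by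
  cases n with
  | ofNat k => rw [Int.ofNat_eq_coe, zpow_natCast, zpow_natCast, Circle.coe_pow']
  | negSucc k => rw [zpow_negSucc, zpow_negSucc, Circle.coe_inv, Circle.coe_pow']

private lemma pd_pow_apply {X : Type*} [Monoid X] [TopologicalSpace X]
    (f : PontryaginDual X) (k : ℕ) (x : X) : (f ^ k) x = f x ^ k := by
  induction k with
  | zero => rfl
  | succ k ih => rw [pow_succ, pow_succ, ← ih]; rfl

private lemma circle_exp_pow (t : ℝ) (m : ℕ) : Circle.exp t ^ m = Circle.exp (m * t) := by
  induction m with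
  | zero => simp
  | succ m ih =>
    rw [pow_succ, ih, ← Circle.exp_add]
    congr 1
    push_cast
    ring

private lemma circle_exp_zpow (t : ℝ) (k : ℤ) : Circle.exp t ^ k = Circle.exp (k * t) := by
  cases k with
  | ofNat m => rw [Int.ofNat_eq_coe, zpow_natCast, circle_exp_pow]; norm_num
  | negSucc m =>
    rw [zpow_negSucc, circle_exp_pow, ← Circle.exp_neg]
    congr 1
    push_cast
    ring

/-- If a function transforms by a scalar `c ≠ 1` under translation by `a`, its integral
against a left-invariant measure vanishes. -/
private lemma integral_eq_zero_of_mul_shift {G : Type*} [MeasurableSpace G] [Group G]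
    [MeasurableMul G] (μ : Measure G) [μ.IsMulLeftInvariant]
    (f : G → ℂ) (a : G) (c : ℂ) (hc : c ≠ 1) (hf : ∀ x, f (a * x) = c * f x) :
    ∫ x, f x ∂μ = 0 := by
  have h := integral_mul_left_eq_self (μ := μ) f a
  simp_rw [hf] at h
  rw [integral_const_mul] at h
  have h2 : (c - 1) * ∫ x, f x ∂μ = 0 := by rw [sub_mul, one_mul, h, sub_self]
  rcases mul_eq_zero.1 h2 with h' | h'
  · exact absurd (sub_eq_zero.1 h') hc
  · exact h'

/-- Two Borel probability measures on the circle with the same "Fourier coefficients"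
coincide. -/
private lemma circle_ext_of_zpow (P Q : Measure Circle) [IsProbabilityMeasure P]
    [IsProbabilityMeasure Q]
    (h : ∀ n : ℤ, ∫ z : Circle, (z : ℂ) ^ n ∂P = ∫ z : Circle, (z : ℂ) ^ n ∂Q) :
    P = Q := by
  classical
  -- the characters of the circle, as continuous maps
  let χ : ℤ → C(Circle, ℂ) := fun n =>
    ⟨fun z => (z : ℂ) ^ n, by
      have : Continuous fun z : Circle => ((z ^ n : Circle) : ℂ) :=
        continuous_subtype_val.comp (continuous_zpow n)
      simpa only [Circle.coe_zpow'] using this⟩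
  have hχ_apply : ∀ (n : ℤ) (z : Circle), χ n z = (z : ℂ) ^ n := fun n z => rfl
  have hstar : ∀ n : ℤ, star (χ n) = χ (-n) := by
    intro n
    ext z
    show (starRingEnd ℂ) ((z : ℂ) ^ n) = (z : ℂ) ^ (-n)
    rw [map_zpow₀, ← Circle.coe_inv_eq_conj, Circle.coe_inv, inv_zpow, ← zpow_neg]
  -- every continuous function is integrable
  have int_all : ∀ (R : Measure Circle) [IsProbabilityMeasure R] (f : C(Circle, ℂ)),
      Integrable (fun z => f z) R := fun R _ f =>
    f.continuous.integrable_of_hasCompactSupport (HasCompactSupport.of_compactSpace _)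
  -- integration against P and Q are continuous functionals
  have cont : ∀ (R : Measure Circle), IsProbabilityMeasure R →
      Continuous fun f : C(Circle, ℂ) => (∫ z, f z ∂ R) := by
    intro R hR
    refine (LipschitzWith.of_dist_le_mul (K := 1) fun f k => ?_).continuous
    rw [NNReal.coe_one, one_mul, dist_eq_norm, ← integral_sub (int_all R f) (int_all R k)]
    calc ‖∫ z, (f z - k z) ∂ R‖ ≤ dist f k * (R Set.univ).toReal := by
          refine norm_integral_le_of_norm_le_const (Filter.Eventually.of_forall fun z => ?_)
          rw [← dist_eq_norm]
          exact ContinuousMap.dist_apply_le_dist z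
      _ = dist f k := by simp [measure_univ]
  -- the set of functions with equal integrals is closed and contains the characters' span
  have hclosed : IsClosed {f : C(Circle, ℂ) | ∫ z, f z ∂P = ∫ z, f z ∂Q} :=
    isClosed_eq (cont P inferInstance) (cont Q inferInstance)
  -- the star subalgebra generated by characters
  let SA : StarSubalgebra ℂ C(Circle, ℂ) :=
    { toSubalgebra := Algebra.adjoin ℂ (Set.range χ)
      star_mem' := by
        show Algebra.adjoin ℂ (Set.range χ) ≤ star (Algebra.adjoin ℂ (Set.range χ))
        refine Algebra.adjoin_le ?_
        rintro - ⟨n, rfl⟩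
        exact Algebra.subset_adjoin ⟨-n, (hstar n).symm⟩ }
  have sep : SA.SeparatesPoints := by
    intro x y hxy
    refine ⟨_, ⟨χ 1, Algebra.subset_adjoin ⟨1, rfl⟩, rfl⟩, ?_⟩
    show (x : ℂ) ^ (1 : ℤ) ≠ (y : ℂ) ^ (1 : ℤ)
    simpa [zpow_one, Circle.coe_inj] using hxy
  have hdense : SA.topologicalClosure = ⊤ :=
    ContinuousMap.starSubalgebra_topologicalClosure_eq_top_of_separatesPoints SA sep
  have coeA : Subalgebra.toSubmodule SA.toSubalgebra = Submodule.span ℂ (Set.range χ) := by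
    apply Algebra.adjoin_eq_span_of_subset
    refine Set.Subset.trans ?_ Submodule.subset_span
    intro x hx
    refine Submonoid.closure_induction (fun _ => id) ⟨0, ?_⟩ ?_ hx
    · ext1 z
      show (z : ℂ) ^ (0 : ℤ) = 1
      exact zpow_zero _
    · rintro - - - - ⟨m, rfl⟩ ⟨n, rfl⟩
      refine ⟨m + n, ?_⟩
      ext1 z
      show (z : ℂ) ^ (m + n) = (z : ℂ) ^ m * (z : ℂ) ^ n
      exact zpow_add₀ (Circle.coe_ne_zero z) m n
  have spanclosure : (Submodule.span ℂ (Set.range χ)).topologicalClosure = ⊤ := by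
    rw [← coeA]
    exact congr_arg (Subalgebra.toSubmodule <| StarSubalgebra.toSubalgebra ·) hdense
  -- the span is contained in the agreement set
  have hSspan : ∀ f ∈ Submodule.span ℂ (Set.range χ), ∫ z, f z ∂P = ∫ z, f z ∂Q := by
    intro f hf
    induction hf using Submodule.span_induction with
    | mem f hf =>
      obtain ⟨n, rfl⟩ := hf
      simpa only [hχ_apply] using h n
    | zero => simp
    | add f k _ _ hf hk =>
      have : ∀ z : Circle, (f + k) z = f z + k z := fun z => rfl
      simp_rw [this]
      rw [integral_add (int_all P f) (int_all P k), integral_add (int_all Q f) (int_all Q k),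
        hf, hk]
    | smul c f _ hf =>
      have : ∀ z : Circle, (c • f) z = c • f z := fun z => rfl
      simp_rw [this]
      rw [integral_smul, integral_smul, hf]
  -- hence every continuous function has equal integrals
  have hall : ∀ f : C(Circle, ℂ), ∫ z, f z ∂P = ∫ z, f z ∂Q := by
    intro f
    have hf : f ∈ closure ((Submodule.span ℂ (Set.range χ) : Submodule ℂ _) :
        Set C(Circle, ℂ)) := by
      have : f ∈ ((Submodule.span ℂ (Set.range χ)).topologicalClosure :
          Set C(Circle, ℂ)) := by
        rw [spanclosure]; trivial
      exact this
    exact closure_minimal hSspan hclosed hf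
  -- conclude via bounded continuous test functions
  apply ext_of_forall_lintegral_eq_of_IsFiniteMeasure
  intro φ
  have hcont : Continuous fun z : Circle => ((φ z : ℝ) : ℂ) :=
    Complex.continuous_ofReal.comp (NNReal.continuous_coe.comp φ.continuous)
  have hfP : Integrable (fun z : Circle => ((φ z : ℝ) : ℂ)) P :=
    int_all P ⟨fun z => ((φ z : ℝ) : ℂ), hcont⟩
  have hfQ : Integrable (fun z : Circle => ((φ z : ℝ) : ℂ)) Q :=
    int_all Q ⟨fun z => ((φ z : ℝ) : ℂ), hcont⟩
  have hreal : ∫ z, ((φ z : ℝ)) ∂P = ∫ z, ((φ z : ℝ)) ∂Q := by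
    have hPQ := hall ⟨fun z => ((φ z : ℝ) : ℂ), hcont⟩
    simp only [ContinuousMap.coe_mk] at hPQ
    have e1 := (Complex.reCLM.integral_comp_comm hfP).symm
    have e2 := (Complex.reCLM.integral_comp_comm hfQ).symm
    simp only [Complex.reCLM_apply, Complex.ofReal_re] at e1 e2
    rw [← e1, ← e2, hPQ]
  have h1 := BoundedContinuousFunction.toReal_lintegral_coe_eq_integral φ P
  have h2 := BoundedContinuousFunction.toReal_lintegral_coe_eq_integral φ Q
  have htr : (∫⁻ z, φ z ∂P).toReal = (∫⁻ z, φ z ∂Q).toReal := by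
    rw [h1, h2]; exact hreal
  exact (ENNReal.toReal_eq_toReal_iff'
    (BoundedContinuousFunction.lintegral_lt_top_of_nnreal P φ).ne
    (BoundedContinuousFunction.lintegral_lt_top_of_nnreal Q φ).ne).1 htr

/-- On a compact abelian group with Haar probability measure, the pushforward of the
Haar measure under a continuous character of infinite order is the normalized Haar
(uniform) measure on the circle. -/
theorem map_haar_of_infinite_order_character_eq_haar_circle
    {X : Type*} [CommGroup X] [TopologicalSpace X] [IsTopologicalGroup X] [CompactSpace X]
    [MeasurableSpace X] [BorelSpace X]
    (μ : Measure X) [μ.IsHaarMeasure] [IsProbabilityMeasure μ]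
    (g : PontryaginDual X) (hg : ∀ n : ℕ, 0 < n → g ^ n ≠ 1)
    (ν : Measure Circle) [ν.IsHaarMeasure] [IsProbabilityMeasure ν] :
    μ.map ⇑g = ν := by
  have hgc : Continuous ⇑g := map_continuous g
  have hgm : Measurable ⇑g := hgc.measurable
  haveI hPm : IsProbabilityMeasure (μ.map ⇑g) :=
    Measure.isProbabilityMeasure_map hgm.aemeasurable
  -- Fourier coefficients of the pushforward measure vanish for n ≠ 0
  have hcharm : ∀ n : ℤ, n ≠ 0 → ∫ z : Circle, (z : ℂ) ^ n ∂(μ.map ⇑g) = 0 := by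
    intro n hn
    have hmeas : AEStronglyMeasurable (fun z : Circle => (z : ℂ) ^ n) (μ.map ⇑g) := by
      have : Continuous fun z : Circle => ((z ^ n : Circle) : ℂ) :=
        continuous_subtype_val.comp (continuous_zpow n)
      simpa only [Circle.coe_zpow'] using this.aestronglyMeasurable
    rw [integral_map hgm.aemeasurable hmeas]
    -- find a point where the character `g ^ n` is nontrivial
    have hex : ∃ a : X, (g a) ^ n ≠ 1 := by
      by_contra hcon
      push_neg at hcon
      have hpos : 0 < n.natAbs := Int.natAbs_pos.2 hn
      refine hg n.natAbs hpos (DFunLike.ext _ _ fun a => ?_)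
      rw [pd_pow_apply]
      have hca := hcon a
      show g a ^ n.natAbs = (1 : PontryaginDual X) a
      have h1 : (1 : PontryaginDual X) a = 1 := rfl
      rw [h1]
      rcases Int.natAbs_eq n with hn' | hn'
      · rw [hn', zpow_natCast] at hca; exact hca
      · rw [hn', zpow_neg, zpow_natCast, inv_eq_one] at hca; exact hca
    obtain ⟨a, ha⟩ := hex
    refine integral_eq_zero_of_mul_shift μ _ a ((g a : ℂ) ^ n) ?_ ?_
    · rw [← Circle.coe_zpow']
      intro hcontra
      exact ha (Circle.coe_injective (by simpa using hcontra))
    · intro x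
      rw [map_mul, Circle.coe_mul, mul_zpow]
  -- Fourier coefficients of ν vanish for n ≠ 0
  have hcharν : ∀ n : ℤ, n ≠ 0 → ∫ z : Circle, (z : ℂ) ^ n ∂ν = 0 := by
    intro n hn
    have hnR : (n : ℝ) ≠ 0 := Int.cast_ne_zero.2 hn
    set a : Circle := Circle.exp (Real.pi / n) with ha_def
    have ha_pow : a ^ n = Circle.exp Real.pi := by
      rw [ha_def, circle_exp_zpow, mul_div_cancel₀ _ hnR]
    have ha : a ^ n ≠ 1 := by
      rw [ha_pow]
      intro hcontra
      have : (Circle.exp Real.pi : ℂ) = 1 := by rw [hcontra]; rfl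
      rw [Circle.coe_exp, Complex.exp_pi_mul_I] at this
      norm_num at this
    refine integral_eq_zero_of_mul_shift ν _ a ((a : ℂ) ^ n) ?_ ?_
    · rw [← Circle.coe_zpow']
      intro hcontra
      exact ha (Circle.coe_injective (by simpa using hcontra))
    · intro z
      rw [Circle.coe_mul, mul_zpow]
  refine circle_ext_of_zpow _ _ fun n => ?_
  rcases eq_or_ne n 0 with rfl | hn
  · simp
  · rw [hcharm n hn, hcharν n hn]
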